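/- Fix γ ≥ 3. For all sufficiently large n there exists a graph G on n vertices with domination number exactly γ such that the number of dominating sets of size γ is at least C(n,γ) − C·log^γ n · n^{γ − 1/(γ−1)} for some absolute constant C depending only on γ. -/

import Mathlib

open Filter

def Dominates {V : Type*} (G : SimpleGraph V) (S : Finset V) : Prop :=
  ∀ v ∉ S, ∃ u ∈ S, G.Adj u v

noncomputable def domCount {V : Type*} [Fintype V] (G : SimpleGraph V) (k : ℕ) : ℕ :=
  letI : DecidablePred (fun S : Finset V => Dominates G S) := Classical.decPred _
  ((Finset.powersetCard k Finset.univ).filter (fun S => Dominates G S)).card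

noncomputable def domNum {V : Type*} [Fintype V] (G : SimpleGraph V) : ℕ :=
  sInf {k | ∃ S : Finset V, S.card = k ∧ Dominates G S}

section Stmt17Aux
open Finset

lemma count_mod_le (R n r : ℕ) (hn : 0 < n) :
    ((Finset.range R).filter (fun s => s % n = r)).card ≤ R / n + 1 := by
  classical
  have hsub : ((Finset.range R).filter (fun s => s % n = r)) ⊆ ((Finset.range (R/n+1)).image (fun t => n * t + r)) := by
    intro s hs
    simp only [mem_filter, mem_range] at hs
    simp only [mem_image, mem_range]
    refine ⟨s / n, ?_, ?_⟩
    · have := Nat.div_le_div_right (c := n) (le_of_lt hs.1)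
      omega
    · have := Nat.div_add_mod s n
      omega
  calc ((Finset.range R).filter (fun s => s % n = r)).card
      ≤ _ := Finset.card_le_card hsub
    _ ≤ (Finset.range (R/n+1)).card := Finset.card_image_le
    _ = R / n + 1 := Finset.card_range _

lemma digits_inj (p : ℕ) (hp : 2 ≤ p) : ∀ (k v w : ℕ), v < p ^ k → w < p ^ k →
    (∀ j < k, v / p ^ j % p = w / p ^ j % p) → v = w := by
  intro k
  induction k with
  | zero => intro v w hv hw _; simp at hv hw; omega
  | succ k ih =>
    intro v w hv hw h
    have h0 := h 0 (by omega)
    simp at h0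
    have hv' : v / p < p ^ k := by
      apply Nat.div_lt_of_lt_mul; rw [← pow_succ']; exact hv
    have hw' : w / p < p ^ k := by
      apply Nat.div_lt_of_lt_mul; rw [← pow_succ']; exact hw
    have hrec : v / p = w / p := by
      apply ih _ _ hv' hw'
      intro j hj
      rw [Nat.div_div_eq_div_mul, Nat.div_div_eq_div_mul, ← pow_succ']
      exact h (j+1) (by omega)
    have h1 : p * (v / p) = p * (w / p) := by rw [hrec]
    have h2 := Nat.div_add_mod v p
    have h3 := Nat.div_add_mod w p
    omega



lemma exists_hyperplane {F : Type*} [Field F] {k m : ℕ} (hm : m ≤ k) (hm0 : 0 < m)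
    (v : Fin m → (Fin k → F)) :
    ∃ (a : Fin k → F) (b : F), a ≠ 0 ∧ ∀ i, ∑ j, a j * v i j = b := by
  classical
  let T : ((Fin k → F) × F) →ₗ[F] (Fin m → F) :=
    { toFun := fun ab => fun i => (∑ j, ab.1 j * v i j) - ab.2
      map_add' := by
        intro x y; funext i
        simp only [Prod.fst_add, Prod.snd_add, Pi.add_apply, add_mul, Finset.sum_add_distrib]
        ring
      map_smul' := by
        intro c x; funext i
        simp only [Prod.smul_fst, Prod.smul_snd, Pi.smul_apply, smul_eq_mul, RingHom.id_apply,
          Finset.mul_sum, mul_sub, mul_assoc] }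
  have hnotinj : ¬ Function.Injective T := by
    intro hinj
    have hle := LinearMap.finrank_le_finrank_of_injective hinj
    simp only [Module.finrank_prod, Module.finrank_pi, Module.finrank_self,
      Fintype.card_fin] at hle
    omega
  rw [Function.not_injective_iff] at hnotinj
  obtain ⟨x, y, hxy, hne⟩ := hnotinj
  have key : ∀ i, ∑ j, (x.1 - y.1) j * v i j = x.2 - y.2 := by
    intro i
    have := congrFun hxy i
    simp only [T, LinearMap.coe_mk, AddHom.coe_mk] at this
    simp only [Pi.sub_apply, sub_mul, Finset.sum_sub_distrib]
    linear_combination this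
  refine ⟨x.1 - y.1, x.2 - y.2, ?_, key⟩
  intro ha
  apply hne
  have hb : x.2 - y.2 = 0 := by
    have := key ⟨0, hm0⟩
    rw [ha] at this
    simpa using this.symm
  have : x.1 = y.1 := by rwa [sub_eq_zero] at ha
  have : x.2 = y.2 := by rwa [sub_eq_zero] at hb
  exact Prod.ext ‹x.1 = y.1› ‹x.2 = y.2›

section Construction

variable (p k γ n : ℕ) [NeZero p]

def memH (ι : Fin k × (Fin k → ZMod p)) (x : Fin k → ZMod p) : Prop :=
  x ι.1 = ι.2 ι.1 + ∑ i ∈ Finset.univ.erase ι.1, ι.2 i * x i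

noncomputable def enc (ι : Fin k × (Fin k → ZMod p)) : ℕ :=
  (Fintype.equivFin (Fin k × (Fin k → ZMod p)) ι : ℕ)

def phi (v : Fin n) : Fin k → ZMod p := fun j => (((v : ℕ) / p ^ (j : ℕ) % p : ℕ) : ZMod p)

def owns (u : Fin n) (ι : Fin k × (Fin k → ZMod p)) : Prop :=
  ∃ j : Fin γ, (γ * enc p k ι + (j : ℕ)) % n = (u : ℕ)

def Hadj (u v : Fin n) : Prop :=
  (∃ ι, owns p k γ n u ι ∧ memH p k ι (phi p k n v)) ∨
  (∃ ι, owns p k γ n v ι ∧ memH p k ι (phi p k n u))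

noncomputable instance decOwns (u : Fin n) (ι : Fin k × (Fin k → ZMod p)) :
    Decidable (owns p k γ n u ι) := by unfold owns; infer_instance

noncomputable instance decMemH (ι : Fin k × (Fin k → ZMod p)) (x : Fin k → ZMod p) :
    Decidable (memH p k ι x) := by unfold memH; infer_instance

noncomputable instance decHadj (u v : Fin n) : Decidable (Hadj p k γ n u v) := by
  unfold Hadj; infer_instance

lemma phi_inj (hp : 2 ≤ p) (hn : n ≤ p ^ k) : Function.Injective (phi p k n) := by
  intro u v huv
  have hdig : ∀ j < k, (u : ℕ) / p ^ j % p = (v : ℕ) / p ^ j % p := by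
    intro j hj
    have hc := congrFun huv ⟨j, hj⟩
    simp only [phi] at hc
    have h1 : (u : ℕ) / p ^ j % p < p := Nat.mod_lt _ (by omega)
    have h2 : (v : ℕ) / p ^ j % p < p := Nat.mod_lt _ (by omega)
    have := congrArg ZMod.val hc
    rwa [ZMod.val_natCast_of_lt h1, ZMod.val_natCast_of_lt h2] at this
  have : (u : ℕ) = (v : ℕ) :=
    digits_inj p hp k u v (lt_of_lt_of_le u.isLt hn) (lt_of_lt_of_le v.isLt hn) hdig
  exact Fin.ext this

/-- Every nonempty set of at most `k` points lies on a common "hyperplane". -/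
lemma cover (hp : p.Prime) (S : Finset (Fin n)) (hS : S.Nonempty) (hSk : S.card ≤ k) :
    ∃ ι, ∀ u ∈ S, memH p k ι (phi p k n u) := by
  classical
  have : Fact p.Prime := ⟨hp⟩
  obtain ⟨a, b, ha, hab⟩ := exists_hyperplane (F := ZMod p) hSk
    (Finset.card_pos.mpr hS) (fun i => phi p k n (S.orderIsoOfFin rfl i))
  have key : ∀ u ∈ S, ∑ j, a j * phi p k n u j = b := by
    intro u hu
    have := hab ((S.orderIsoOfFin rfl).symm ⟨u, hu⟩)
    simpa using this
  obtain ⟨j₀, hj₀⟩ := Function.ne_iff.mp ha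
  simp only [Pi.zero_apply] at hj₀
  refine ⟨(j₀, fun i => if i = j₀ then b * (a j₀)⁻¹ else -(a i) * (a j₀)⁻¹), ?_⟩
  intro u hu
  have hsum := key u hu
  rw [← Finset.add_sum_erase _ _ (Finset.mem_univ j₀)] at hsum
  simp only [memH]
  beta_reduce
  rw [if_pos trivial]
  have hcong : ∑ i ∈ Finset.univ.erase j₀,
        (if i = j₀ then b * (a j₀)⁻¹ else -(a i) * (a j₀)⁻¹) * phi p k n u i
      = (∑ i ∈ Finset.univ.erase j₀, a i * phi p k n u i) * (-(a j₀)⁻¹) := by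
    rw [Finset.sum_mul]
    apply Finset.sum_congr rfl
    intro i hi
    rw [if_neg (Finset.mem_erase.mp hi).1]
    ring
  rw [hcong]
  field_simp
  linear_combination hsum

lemma enc_inj : Function.Injective (enc p k) :=
  fun a b h => (Fintype.equivFin _).injective (Fin.ext h)

lemma enc_lt (ι : Fin k × (Fin k → ZMod p)) :
    enc p k ι < Fintype.card (Fin k × (Fin k → ZMod p)) :=
  (Fintype.equivFin _ ι).isLt

lemma card_Idx : Fintype.card (Fin k × (Fin k → ZMod p)) = k * p ^ k := by
  simp [ZMod.card]

lemma owners_card (ι : Fin k × (Fin k → ZMod p)) (hn : 0 < n) :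
    (Finset.univ.filter (fun w : Fin n => owns p k γ n w ι)).card ≤ γ := by
  classical
  have hsub : Finset.univ.filter (fun w : Fin n => owns p k γ n w ι)
      ⊆ (Finset.univ : Finset (Fin γ)).image
        (fun j : Fin γ => (⟨(γ * enc p k ι + (j : ℕ)) % n, Nat.mod_lt _ hn⟩ : Fin n)) := by
    intro w hw
    simp only [mem_filter, mem_univ, true_and] at hw
    simp only [owns] at hw
    obtain ⟨j, hj⟩ := hw
    exact Finset.mem_image.mpr ⟨j, Finset.mem_univ j, Fin.ext hj⟩
  calc _ ≤ _ := card_le_card hsub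
    _ ≤ (Finset.univ : Finset (Fin γ)).card := card_image_le
    _ = γ := by simp

lemma exists_owner_notin (ι : Fin k × (Fin k → ZMod p)) (hn : γ ≤ n)
    (S : Finset (Fin n)) (hS : S.card < γ) :
    ∃ w : Fin n, w ∉ S ∧ owns p k γ n w ι := by
  classical
  have hγ0 : 0 < γ := Nat.lt_of_le_of_lt (Nat.zero_le _) hS
  have hn0 : 0 < n := lt_of_lt_of_le hγ0 hn
  set f : Fin γ → Fin n := fun j => ⟨(γ * enc p k ι + (j : ℕ)) % n, Nat.mod_lt _ hn0⟩ with hf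
  have hfinj : Function.Injective f := by
    intro j1 j2 h
    have h' : (γ * enc p k ι + (j1 : ℕ)) % n = (γ * enc p k ι + (j2 : ℕ)) % n :=
      congrArg Fin.val h
    have hmod : (j1 : ℕ) ≡ (j2 : ℕ) [MOD n] := Nat.ModEq.add_left_cancel' _ h'
    exact Fin.ext (hmod.eq_of_lt_of_lt (lt_of_lt_of_le j1.isLt hn) (lt_of_lt_of_le j2.isLt hn))
  by_contra hcon
  push_neg at hcon
  have hmem : ∀ j, f j ∈ S := by
    intro j
    by_contra hj
    exact hcon (f j) hj ⟨j, rfl⟩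
  have hsub : Finset.univ.image f ⊆ S := by
    intro w hw
    obtain ⟨j, _, rfl⟩ := Finset.mem_image.mp hw
    exact hmem j
  have := card_le_card hsub
  rw [Finset.card_image_of_injective _ hfinj] at this
  simp only [card_univ, Fintype.card_fin] at this
  omega

lemma card_hyp_through (x : Fin k → ZMod p) :
    (Finset.univ.filter (fun ι : Fin k × (Fin k → ZMod p) => memH p k ι x)).card
      ≤ k * p ^ (k - 1) := by
  classical
  have hinj : Set.InjOn
      (fun ι : Fin k × (Fin k → ZMod p) =>
        (⟨ι.1, fun i => ι.2 i.1⟩ : Σ j : Fin k, ({i : Fin k // i ≠ j} → ZMod p)))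
      ↑(Finset.univ.filter (fun ι : Fin k × (Fin k → ZMod p) => memH p k ι x)) := by
    intro ι hι ι' hι' heq
    simp only [mem_coe, mem_filter, mem_univ, true_and] at hι hι'
    simp only [memH] at hι hι'
    obtain ⟨j, c⟩ := ι
    obtain ⟨j', c'⟩ := ι'
    simp only at hι hι' heq ⊢
    obtain ⟨hj, hc⟩ := Sigma.mk.inj_iff.mp heq
    subst hj
    have hc' : ∀ i : {i : Fin k // i ≠ j}, c i.1 = c' i.1 := by
      intro i
      exact congrFun (eq_of_heq hc) i
    have hoff : ∀ i, i ≠ j → c i = c' i := fun i hi => hc' ⟨i, hi⟩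
    have hsum : ∑ i ∈ Finset.univ.erase j, c i * x i = ∑ i ∈ Finset.univ.erase j, c' i * x i := by
      apply Finset.sum_congr rfl
      intro i hi
      rw [hoff i (Finset.mem_erase.mp hi).1]
    have hcj : c j = c' j := by
      have := hι.symm.trans hι'
      rw [hsum] at this
      exact add_right_cancel this
    have : c = c' := by
      funext i
      by_cases hij : i = j
      · subst hij; exact hcj
      · exact hoff i hij
    rw [this]
  calc (Finset.univ.filter (fun ι : Fin k × (Fin k → ZMod p) => memH p k ι x)).card
      ≤ (Finset.univ : Finset (Σ j : Fin k, ({i : Fin k // i ≠ j} → ZMod p))).card :=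
        Finset.card_le_card_of_injOn _ (fun a _ => Finset.mem_univ _) hinj
    _ = Fintype.card (Σ j : Fin k, ({i : Fin k // i ≠ j} → ZMod p)) := Finset.card_univ
    _ = k * p ^ (k - 1) := by
        rw [Fintype.card_sigma]
        have hc : ∀ j : Fin k, Fintype.card ({i : Fin k // i ≠ j} → ZMod p) = p ^ (k - 1) := by
          intro j
          rw [Fintype.card_fun, ZMod.card]
          congr 1
          rw [Fintype.card_subtype_compl, Fintype.card_subtype_eq, Fintype.card_fin]
        simp [hc]

lemma card_hyp_points (hp2 : 2 ≤ p) (hn : n ≤ p ^ k) (ι : Fin k × (Fin k → ZMod p)) :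
    (Finset.univ.filter (fun u : Fin n => memH p k ι (phi p k n u))).card ≤ p ^ (k - 1) := by
  classical
  have hinj : Set.InjOn
      (fun u : Fin n => (fun i : {i : Fin k // i ≠ ι.1} => phi p k n u i.1))
      ↑(Finset.univ.filter (fun u : Fin n => memH p k ι (phi p k n u))) := by
    intro u hu u' hu' heq
    simp only [mem_coe, mem_filter, mem_univ, true_and] at hu hu'
    simp only [memH] at hu hu'
    have hoff : ∀ i, i ≠ ι.1 → phi p k n u i = phi p k n u' i := by
      intro i hi
      exact congrFun heq ⟨i, hi⟩
    have hsum : ∑ i ∈ Finset.univ.erase ι.1, ι.2 i * phi p k n u i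
        = ∑ i ∈ Finset.univ.erase ι.1, ι.2 i * phi p k n u' i := by
      apply Finset.sum_congr rfl
      intro i hi
      rw [hoff i (Finset.mem_erase.mp hi).1]
    have hj : phi p k n u ι.1 = phi p k n u' ι.1 := by
      rw [hu, hu', hsum]
    apply phi_inj p k n hp2 hn
    funext i
    by_cases hij : i = ι.1
    · subst hij; exact hj
    · exact hoff i hij
  calc (Finset.univ.filter (fun u : Fin n => memH p k ι (phi p k n u))).card
      ≤ (Finset.univ : Finset ({i : Fin k // i ≠ ι.1} → ZMod p)).card :=
        Finset.card_le_card_of_injOn _ (fun a _ => Finset.mem_univ _) hinj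
    _ = Fintype.card ({i : Fin k // i ≠ ι.1} → ZMod p) := Finset.card_univ
    _ = p ^ (k - 1) := by
        rw [Fintype.card_fun, ZMod.card]
        congr 1
        rw [Fintype.card_subtype_compl, Fintype.card_subtype_eq, Fintype.card_fin]

lemma card_ownedBy (hn0 : 0 < n) (hγ0 : 0 < γ) (h4 : p ^ k ≤ 4 ^ k * n) (v : Fin n) :
    (Finset.univ.filter
        (fun ι : Fin k × (Fin k → ZMod p) => owns p k γ n v ι)).card
      ≤ γ * k * 4 ^ k + γ + 1 := by
  classical
  set M := Fintype.card (Fin k × (Fin k → ZMod p)) with hM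
  have hstep : (Finset.univ.filter
      (fun ι : Fin k × (Fin k → ZMod p) => owns p k γ n v ι)).card
      ≤ ((Finset.range (γ * M + γ)).filter (fun s => s % n = (v : ℕ))).card := by
    apply Finset.card_le_card_of_injOn
      (f := fun ι => if h : owns p k γ n v ι
        then γ * enc p k ι + ((Classical.choose h : Fin γ) : ℕ) else 0)
    · intro ι hι
      simp only [mem_coe, mem_filter, mem_univ, true_and] at hι
      beta_reduce
      rw [dif_pos hι]
      simp only [mem_coe, mem_filter, mem_range]
      constructor
      · have h1 := enc_lt p k ι
        have h2 := (Classical.choose hι).isLt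
        have : γ * enc p k ι + γ ≤ γ * M := by
          have : enc p k ι + 1 ≤ M := h1
          calc γ * enc p k ι + γ = γ * (enc p k ι + 1) := by ring
            _ ≤ γ * M := Nat.mul_le_mul_left _ this
        omega
      · exact Classical.choose_spec hι
    · intro ι hι ι' hι' heq
      simp only [mem_coe, mem_filter, mem_univ, true_and] at hι hι'
      beta_reduce at heq
      rw [dif_pos hι, dif_pos hι'] at heq
      have hj1 := (Classical.choose hι).isLt
      have hj2 := (Classical.choose hι').isLt
      have henc : enc p k ι = enc p k ι' := by
        have e1 : (γ * enc p k ι + ((Classical.choose hι : Fin γ) : ℕ)) / γ = enc p k ι := by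
          rw [Nat.mul_add_div hγ0, Nat.div_eq_of_lt hj1]; omega
        have e2 : (γ * enc p k ι' + ((Classical.choose hι' : Fin γ) : ℕ)) / γ = enc p k ι' := by
          rw [Nat.mul_add_div hγ0, Nat.div_eq_of_lt hj2]; omega
        rw [← e1, ← e2, heq]
      exact enc_inj p k henc
  have hcount := count_mod_le (γ * M + γ) n (v : ℕ) hn0
  have hMle : M ≤ k * (4 ^ k * n) := by
    rw [hM, card_Idx]
    exact Nat.mul_le_mul_left _ h4
  have hfinal : (γ * M + γ) / n ≤ γ * k * 4 ^ k + γ := by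
    have h1 : γ * M + γ ≤ (γ * k * 4 ^ k + γ) * n := by
      have h2 : γ * M ≤ γ * k * 4 ^ k * n := by
        calc γ * M ≤ γ * (k * (4 ^ k * n)) := Nat.mul_le_mul_left _ hMle
          _ = γ * k * 4 ^ k * n := by ring
      have h3 : γ ≤ γ * n := Nat.le_mul_of_pos_right _ hn0
      calc γ * M + γ ≤ γ * k * 4 ^ k * n + γ * n := Nat.add_le_add h2 h3
        _ = (γ * k * 4 ^ k + γ) * n := by ring
    calc (γ * M + γ) / n ≤ ((γ * k * 4 ^ k + γ) * n) / n := Nat.div_le_div_right h1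
      _ = γ * k * 4 ^ k + γ := Nat.mul_div_cancel _ hn0
  calc _ ≤ _ := hstep
    _ ≤ (γ * M + γ) / n + 1 := hcount
    _ ≤ (γ * k * 4 ^ k + γ) + 1 := Nat.add_le_add_right hfinal 1

lemma card_Nbr (hp2 : 2 ≤ p) (hn : n ≤ p ^ k) (h4 : p ^ k ≤ 4 ^ k * n)
    (hn0 : 0 < n) (hγ0 : 0 < γ) (v : Fin n) :
    (Finset.univ.filter (fun u : Fin n => Hadj p k γ n u v)).card
      ≤ (γ * k + (γ * k * 4 ^ k + γ + 1)) * p ^ (k - 1) := by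
  classical
  set A := (Finset.univ.filter
      (fun ι : Fin k × (Fin k → ZMod p) => memH p k ι (phi p k n v))).biUnion
    (fun ι => Finset.univ.filter (fun w : Fin n => owns p k γ n w ι)) with hA
  set B := (Finset.univ.filter
      (fun ι : Fin k × (Fin k → ZMod p) => owns p k γ n v ι)).biUnion
    (fun ι => Finset.univ.filter (fun u : Fin n => memH p k ι (phi p k n u))) with hB
  have hsub : Finset.univ.filter (fun u : Fin n => Hadj p k γ n u v) ⊆ A ∪ B := by
    intro u hu
    simp only [mem_filter, mem_univ, true_and] at hu
    simp only [Hadj] at hu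
    rcases hu with ⟨ι, ho, hm⟩ | ⟨ι, ho, hm⟩
    · apply Finset.mem_union_left
      rw [hA]
      apply Finset.mem_biUnion.mpr
      exact ⟨ι, by simp [hm], by simp [ho]⟩
    · apply Finset.mem_union_right
      rw [hB]
      apply Finset.mem_biUnion.mpr
      exact ⟨ι, by simp [ho], by simp [hm]⟩
  have hAcard : A.card ≤ (k * p ^ (k - 1)) * γ := by
    calc A.card ≤ ∑ ι ∈ Finset.univ.filter
          (fun ι : Fin k × (Fin k → ZMod p) => memH p k ι (phi p k n v)),
          (Finset.univ.filter (fun w : Fin n => owns p k γ n w ι)).card :=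
        Finset.card_biUnion_le
      _ ≤ ∑ _ι ∈ Finset.univ.filter
          (fun ι : Fin k × (Fin k → ZMod p) => memH p k ι (phi p k n v)), γ :=
        Finset.sum_le_sum (fun ι _ => owners_card p k γ n ι hn0)
      _ = (Finset.univ.filter
          (fun ι : Fin k × (Fin k → ZMod p) => memH p k ι (phi p k n v))).card * γ := by
        rw [Finset.sum_const, smul_eq_mul]
      _ ≤ (k * p ^ (k - 1)) * γ :=
        Nat.mul_le_mul_right _ (card_hyp_through p k (phi p k n v))
  have hBcard : B.card ≤ (γ * k * 4 ^ k + γ + 1) * p ^ (k - 1) := by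
    calc B.card ≤ ∑ ι ∈ Finset.univ.filter
          (fun ι : Fin k × (Fin k → ZMod p) => owns p k γ n v ι),
          (Finset.univ.filter (fun u : Fin n => memH p k ι (phi p k n u))).card :=
        Finset.card_biUnion_le
      _ ≤ ∑ _ι ∈ Finset.univ.filter
          (fun ι : Fin k × (Fin k → ZMod p) => owns p k γ n v ι), p ^ (k - 1) :=
        Finset.sum_le_sum (fun ι _ => card_hyp_points p k n hp2 hn ι)
      _ = (Finset.univ.filter
          (fun ι : Fin k × (Fin k → ZMod p) => owns p k γ n v ι)).card * p ^ (k - 1) := by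
        rw [Finset.sum_const, smul_eq_mul]
      _ ≤ (γ * k * 4 ^ k + γ + 1) * p ^ (k - 1) :=
        Nat.mul_le_mul_right _ (card_ownedBy p k γ n hn0 hγ0 h4 v)
  calc (Finset.univ.filter (fun u : Fin n => Hadj p k γ n u v)).card
      ≤ (A ∪ B).card := card_le_card hsub
    _ ≤ A.card + B.card := card_union_le _ _
    _ ≤ (k * p ^ (k - 1)) * γ + (γ * k * 4 ^ k + γ + 1) * p ^ (k - 1) := by
        exact Nat.add_le_add hAcard hBcard
    _ = (γ * k + (γ * k * 4 ^ k + γ + 1)) * p ^ (k - 1) := by ring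

def Gr : SimpleGraph (Fin n) where
  Adj u v := u ≠ v ∧ ¬ Hadj p k γ n u v
  symm := by
    refine ⟨?_⟩
    rintro u v ⟨h1, h2⟩
    exact ⟨h1.symm, fun h => h2 (Or.symm h)⟩
  loopless := ⟨fun u h => h.1 rfl⟩

lemma gr_adj (u v : Fin n) : (Gr p k γ n).Adj u v ↔ u ≠ v ∧ ¬ Hadj p k γ n u v := Iff.rfl

noncomputable instance decGrAdj : DecidableRel (Gr p k γ n).Adj := fun u v =>
  decidable_of_iff (u ≠ v ∧ ¬ Hadj p k γ n u v) (gr_adj p k γ n u v).symm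

noncomputable instance decDom (S : Finset (Fin n)) : Decidable (Dominates (Gr p k γ n) S) := by
  unfold Dominates; infer_instance

lemma not_dominates_iff (S : Finset (Fin n)) :
    ¬ Dominates (Gr p k γ n) S ↔ ∃ v, v ∉ S ∧ ∀ u ∈ S, Hadj p k γ n u v := by
  unfold Dominates
  push_neg
  constructor
  · rintro ⟨v, hvS, hv⟩
    refine ⟨v, hvS, fun u hu => ?_⟩
    have h := hv u hu
    rw [gr_adj] at h
    push_neg at h
    exact h (by rintro rfl; exact hvS hu)
  · rintro ⟨v, hvS, hv⟩
    refine ⟨v, hvS, fun u hu => ?_⟩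
    rw [gr_adj]
    push_neg
    intro _
    exact hv u hu

lemma small_not_dominates (hp : p.Prime) (hγn : γ ≤ n) (hkγ : k + 1 = γ)
    (S : Finset (Fin n)) (hS : S.card < γ) : ¬ Dominates (Gr p k γ n) S := by
  have hn0 : 0 < n := by
    have : 0 < γ := Nat.lt_of_le_of_lt (Nat.zero_le _) hS
    omega
  rw [not_dominates_iff]
  by_cases hSe : S.Nonempty
  · obtain ⟨ι, hι⟩ := cover p k n hp S hSe (by omega)
    obtain ⟨w, hwS, hwo⟩ := exists_owner_notin p k γ n ι hγn S hS
    exact ⟨w, hwS, fun u hu => Or.inr ⟨ι, hwo, hι u hu⟩⟩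
  · have hSempty : S = ∅ := Finset.not_nonempty_iff_eq_empty.mp hSe
    subst hSempty
    exact ⟨⟨0, hn0⟩, by simp, by simp⟩

lemma bad_card (hp2 : 2 ≤ p) (hn : n ≤ p ^ k) (h4 : p ^ k ≤ 4 ^ k * n)
    (hn0 : 0 < n) (hγ0 : 0 < γ) :
    ((Finset.powersetCard γ (Finset.univ : Finset (Fin n))).filter
      (fun S => ¬ Dominates (Gr p k γ n) S)).card
      ≤ n * ((γ * k + (γ * k * 4 ^ k + γ + 1)) * p ^ (k - 1)) ^ γ := by
  classical
  set D := (γ * k + (γ * k * 4 ^ k + γ + 1)) * p ^ (k - 1) with hD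
  have hsub : ((Finset.powersetCard γ (Finset.univ : Finset (Fin n))).filter
      (fun S => ¬ Dominates (Gr p k γ n) S))
      ⊆ Finset.univ.biUnion (fun v : Fin n =>
          Finset.powersetCard γ (Finset.univ.filter (fun u : Fin n => Hadj p k γ n u v))) := by
    intro S hS
    simp only [mem_filter] at hS
    obtain ⟨hSmem, hSbad⟩ := hS
    rw [not_dominates_iff] at hSbad
    obtain ⟨v, hvS, hv⟩ := hSbad
    apply Finset.mem_biUnion.mpr
    refine ⟨v, Finset.mem_univ v, ?_⟩
    rw [Finset.mem_powersetCard]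
    constructor
    · intro u hu
      simp only [mem_filter, mem_univ, true_and]
      exact hv u hu
    · exact (Finset.mem_powersetCard_univ.mp hSmem)
  calc _ ≤ _ := card_le_card hsub
    _ ≤ ∑ v : Fin n, (Finset.powersetCard γ
        (Finset.univ.filter (fun u : Fin n => Hadj p k γ n u v))).card :=
      Finset.card_biUnion_le
    _ ≤ ∑ _v : Fin n, D ^ γ := by
        apply Finset.sum_le_sum
        intro v _
        rw [Finset.card_powersetCard]
        calc (Finset.univ.filter (fun u : Fin n => Hadj p k γ n u v)).card.choose γ
            ≤ (Finset.univ.filter (fun u : Fin n => Hadj p k γ n u v)).card ^ γ :=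
              Nat.choose_le_pow _ _
          _ ≤ D ^ γ := Nat.pow_le_pow_left (card_Nbr p k γ n hp2 hn h4 hn0 hγ0 v) γ
    _ = n * D ^ γ := by
        rw [Finset.sum_const, smul_eq_mul, Finset.card_univ, Fintype.card_fin]

end Construction

end Stmt17Aux

open Finset in
/-- For fixed `γ ≥ 3` and all large `n` there is a graph on `n` vertices with
domination number exactly `γ` whose number of dominating `γ`-sets is at least
`C(n,γ) - C·log^γ n · n^(γ-1/(γ-1))`. -/
theorem stmt17 (γ : ℕ) (hγ : 3 ≤ γ) :
    ∃ C : ℝ, ∃ N : ℕ, ∀ n : ℕ, N ≤ n →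
      ∃ G : SimpleGraph (Fin n), domNum G = γ ∧
        (Nat.choose n γ : ℝ) -
            C * Real.log n ^ γ * (n : ℝ) ^ ((γ : ℝ) - 1 / ((γ : ℝ) - 1)) ≤
          (domCount G γ : ℝ) := by
  set k := γ - 1 with hkdef
  have hkγ : k + 1 = γ := by omega
  have hk1 : 1 ≤ k := by omega
  have hk0 : (k : ℝ) ≠ 0 := by
    have : (1:ℝ) ≤ (k:ℝ) := by exact_mod_cast hk1
    linarith
  set Dn : ℕ := γ * k + (γ * k * 4 ^ k + γ + 1) with hDn
  set Cn : ℕ := Dn ^ γ * 4 ^ (k * γ) with hCn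
  set Kn : ℕ := Cn * 2 ^ γ * Nat.factorial γ + 1 with hKn
  refine ⟨(Cn : ℝ), max (max 3 (2 * γ)) (Kn ^ k), ?_⟩
  intro n hn
  have hn3 : 3 ≤ n := le_trans (le_trans (le_max_left _ _) (le_max_left _ _)) hn
  have hn2γ : 2 * γ ≤ n := le_trans (le_trans (le_max_right _ _) (le_max_left _ _)) hn
  have hnK : Kn ^ k ≤ n := le_trans (le_max_right _ _) hn
  have hn0 : 0 < n := by omega
  have hγn : γ ≤ n := by omega
  have hγ0 : 0 < γ := by omega
  -- choose the prime p
  have hex : ∃ m : ℕ, n ≤ m ^ k := ⟨n, Nat.le_self_pow (by omega) n⟩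
  set m := Nat.find hex with hm
  have hmn : n ≤ m ^ k := Nat.find_spec hex
  have hm2 : 2 ≤ m := by
    by_contra h
    push_neg at h
    have h1 : m ^ k ≤ 1 ^ k := Nat.pow_le_pow_left (by omega) k
    rw [one_pow] at h1
    omega
  obtain ⟨p, hp, hmp, hp2m⟩ := Nat.exists_prime_lt_and_le_two_mul m (by omega)
  have hp2 : 2 ≤ p := hp.two_le
  haveI : NeZero p := ⟨by omega⟩
  have hnpk : n ≤ p ^ k := le_trans hmn (Nat.pow_le_pow_left (by omega) k)
  have hmk1 : (m - 1) ^ k < n := by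
    have := Nat.find_min hex (show m - 1 < m by omega)
    omega
  have h4 : p ^ k ≤ 4 ^ k * n := by
    have hple : p ≤ 4 * (m - 1) := by omega
    calc p ^ k ≤ (4 * (m - 1)) ^ k := Nat.pow_le_pow_left hple k
      _ = 4 ^ k * (m - 1) ^ k := mul_pow 4 (m - 1) k
      _ ≤ 4 ^ k * n := Nat.mul_le_mul_left _ (by omega)
  -- the graph
  refine ⟨Gr p k γ n, ?_⟩
  -- bad sets
  set B := ((Finset.powersetCard γ (Finset.univ : Finset (Fin n))).filter
      (fun S => ¬ Dominates (Gr p k γ n) S)).card with hB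
  have hbad : B ≤ n * (Dn * p ^ (k - 1)) ^ γ := bad_card p k γ n hp2 hnpk h4 hn0 hγ0
  have hdomCount_eq : domCount (Gr p k γ n) γ =
      ((Finset.powersetCard γ (Finset.univ : Finset (Fin n))).filter
        (fun S => Dominates (Gr p k γ n) S)).card := by
    unfold domCount
    rw [Finset.filter_congr_decidable]
  have hsplit : domCount (Gr p k γ n) γ + B = Nat.choose n γ := by
    rw [hdomCount_eq]
    have hpart := Finset.card_filter_add_card_filter_not
      (s := Finset.powersetCard γ (Finset.univ : Finset (Fin n)))
      (p := fun S => Dominates (Gr p k γ n) S)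
    rw [Finset.card_powersetCard, Finset.card_univ, Fintype.card_fin] at hpart
    rw [hB]
    convert hpart using 3
  -- real estimates
  have hnRpos : (0:ℝ) < n := by exact_mod_cast hn0
  have hkR : (k:ℝ) = (γ:ℝ) - 1 := by
    have := congrArg (fun t : ℕ => (t:ℝ)) hkγ
    push_cast at this
    linarith
  have hγR : (γ:ℝ) = (k:ℝ) + 1 := by linarith
  set e : ℝ := (γ:ℝ) - 1 / ((γ:ℝ) - 1) with he
  have he2 : e = (γ:ℝ) - 1 / (k:ℝ) := by rw [he, hkR]
  have hkRpos : (0:ℝ) < k := by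
    have : (1:ℝ) ≤ (k:ℝ) := by exact_mod_cast hk1
    linarith
  have hprpow : (n:ℝ) ^ (1/(k:ℝ)) ≤ (p:ℝ) := by
    have h1 : ((n:ℝ)) ^ (1/(k:ℝ)) ≤ (((p:ℝ) ^ (k:ℕ))) ^ (1/(k:ℝ)) := by
      apply Real.rpow_le_rpow (le_of_lt hnRpos) (by exact_mod_cast hnpk) (by positivity)
    rwa [← Real.rpow_natCast (p:ℝ) k, ← Real.rpow_mul (by positivity), mul_one_div,
      div_self hk0, Real.rpow_one] at h1
  have hnrpos : (0:ℝ) < (n:ℝ) ^ (1/(k:ℝ)) := Real.rpow_pos_of_pos hnRpos _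
  have hpow1 : ((p:ℝ)) ^ (k - 1 : ℕ) ≤ 4 ^ k * (n:ℝ) ^ (1 - 1/(k:ℝ)) := by
    have hmulp : ((p:ℝ)) ^ (k - 1 : ℕ) * (p:ℝ) = (p:ℝ) ^ (k:ℕ) := by
      rw [← pow_succ]
      congr 1
      omega
    have h2 : ((p:ℝ)) ^ (k:ℕ) ≤ 4 ^ k * (n:ℝ) := by exact_mod_cast h4
    have hpRpos : (0:ℝ) < p := by exact_mod_cast (by omega : 0 < p)
    calc ((p:ℝ)) ^ (k-1:ℕ) = (p:ℝ) ^ (k:ℕ) / p := by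
          rw [← hmulp]; field_simp
      _ ≤ (4 ^ k * (n:ℝ)) / ((n:ℝ) ^ (1/(k:ℝ))) :=
          div_le_div₀ (by positivity) h2 hnrpos hprpow
      _ = 4 ^ k * (n:ℝ) ^ (1 - 1/(k:ℝ)) := by
          rw [div_eq_iff (ne_of_gt hnrpos), mul_assoc, ← Real.rpow_add hnRpos]
          norm_num
  have hexp : 1 + (1 - 1/(k:ℝ)) * (γ:ℝ) = e := by
    rw [he2, hγR]
    field_simp
    ring
  have hCnR : (Cn:ℝ) = (Dn:ℝ) ^ γ * (4:ℝ) ^ (k * γ) := by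
    rw [hCn]; push_cast; ring
  have hbadR : (B:ℝ) ≤ (Cn:ℝ) * (n:ℝ) ^ e := by
    have h1 : (B:ℝ) ≤ (n:ℝ) * ((Dn:ℝ) * (p:ℝ) ^ (k-1:ℕ)) ^ γ := by exact_mod_cast hbad
    have h2 : ((Dn:ℝ) * (p:ℝ) ^ (k-1:ℕ)) ^ γ ≤ ((Dn:ℝ) * (4 ^ k * (n:ℝ) ^ (1 - 1/(k:ℝ)))) ^ γ := by
      apply pow_le_pow_left₀ (by positivity)
      apply mul_le_mul_of_nonneg_left hpow1 (by positivity)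
    have h3 : ((n:ℝ) ^ (1 - 1/(k:ℝ))) ^ (γ:ℕ) = (n:ℝ) ^ ((1 - 1/(k:ℝ)) * (γ:ℕ)) := by
      rw [← Real.rpow_natCast ((n:ℝ) ^ (1 - 1/(k:ℝ))) γ, ← Real.rpow_mul (le_of_lt hnRpos)]
    calc (B:ℝ) ≤ (n:ℝ) * ((Dn:ℝ) * (p:ℝ) ^ (k-1:ℕ)) ^ γ := h1
      _ ≤ (n:ℝ) * ((Dn:ℝ) * (4 ^ k * (n:ℝ) ^ (1 - 1/(k:ℝ)))) ^ γ := by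
          apply mul_le_mul_of_nonneg_left h2 (by positivity)
      _ = (Dn:ℝ) ^ γ * (4:ℝ) ^ (k * γ) * ((n:ℝ) * ((n:ℝ) ^ (1 - 1/(k:ℝ))) ^ (γ:ℕ)) := by
          rw [mul_pow, mul_pow, ← pow_mul]
          ring
      _ = (Cn:ℝ) * (n:ℝ) ^ e := by
          rw [hCnR, h3, ← Real.rpow_one_add' (le_of_lt hnRpos) ?hne]
          · rw [hexp]
          · rw [hexp, he2]
            intro hcon
            have : (γ:ℝ) = 1 / (k:ℝ) := by linarith
            have hklarge : (1:ℝ) / (k:ℝ) ≤ 1 := by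
              rw [div_le_one hkRpos]
              exact_mod_cast hk1
            have : (3:ℝ) ≤ (γ:ℝ) := by exact_mod_cast hγ
            linarith
  have hlog1 : (1:ℝ) ≤ Real.log n := by
    rw [Real.le_log_iff_exp_le hnRpos]
    calc Real.exp 1 ≤ 2.7182818286 := le_of_lt Real.exp_one_lt_d9
      _ ≤ 3 := by norm_num
      _ ≤ (n:ℝ) := by exact_mod_cast hn3
  have hbadR2 : (B:ℝ) ≤ (Cn:ℝ) * Real.log n ^ γ * (n:ℝ) ^ e := by
    calc (B:ℝ) ≤ (Cn:ℝ) * (n:ℝ) ^ e := hbadR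
      _ = (Cn:ℝ) * 1 * (n:ℝ) ^ e := by ring
      _ ≤ (Cn:ℝ) * Real.log n ^ γ * (n:ℝ) ^ e := by
          apply mul_le_mul_of_nonneg_right _ (by positivity)
          apply mul_le_mul_of_nonneg_left _ (by positivity)
          exact one_le_pow₀ hlog1
  -- choose lower bound
  have hfacpos : (0:ℝ) < (Nat.factorial γ : ℝ) := by exact_mod_cast Nat.factorial_pos γ
  have hchoose : (Cn:ℝ) * (n:ℝ) ^ e < (Nat.choose n γ : ℝ) := by
    have hbase : (n:ℝ)/2 ≤ ((n + 1 - γ : ℕ):ℝ) := by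
      have hcast : ((n + 1 - γ : ℕ):ℝ) = (n:ℝ) + 1 - (γ:ℝ) := by
        have : γ ≤ n + 1 := by omega
        push_cast [Nat.cast_sub this]
        ring
      rw [hcast]
      have h2γ : 2 * (γ:ℝ) ≤ (n:ℝ) := by exact_mod_cast hn2γ
      linarith
    have h1 : ((n:ℝ)/2) ^ γ / (Nat.factorial γ : ℝ) ≤ (Nat.choose n γ : ℝ) := by
      have h2 := Nat.pow_le_choose (α := ℝ) γ n
      refine le_trans ?_ h2
      gcongr
    have hKnR : (Kn:ℝ) ≤ (n:ℝ) ^ (1/(k:ℝ)) := by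
      have hc : ((Kn ^ k : ℕ):ℝ) ≤ (n:ℝ) := by exact_mod_cast hnK
      have hKn0 : (0:ℝ) ≤ (Kn:ℝ) := by positivity
      calc (Kn:ℝ) = (((Kn:ℝ)) ^ (k:ℕ)) ^ (1/(k:ℝ)) := by
            rw [← Real.rpow_natCast (Kn:ℝ) k, ← Real.rpow_mul hKn0, mul_one_div,
              div_self hk0, Real.rpow_one]
        _ ≤ (n:ℝ) ^ (1/(k:ℝ)) := by
            apply Real.rpow_le_rpow (by positivity) ?_ (by positivity)
            push_cast at hc
            exact_mod_cast hc
    have hKnC : (Cn:ℝ) * 2 ^ γ * (Nat.factorial γ : ℝ) < (Kn:ℝ) := by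
      rw [hKn]
      push_cast
      linarith
    have hCn_lt : (Cn:ℝ) < (n:ℝ) ^ (1/(k:ℝ)) / (2 ^ γ * (Nat.factorial γ : ℝ)) := by
      rw [lt_div_iff₀ (by positivity)]
      calc (Cn:ℝ) * (2 ^ γ * (Nat.factorial γ : ℝ)) = (Cn:ℝ) * 2 ^ γ * (Nat.factorial γ : ℝ) := by ring
        _ < (Kn:ℝ) := hKnC
        _ ≤ (n:ℝ) ^ (1/(k:ℝ)) := hKnR
    have hne : (n:ℝ) ^ e * (n:ℝ) ^ (1/(k:ℝ)) = ((n:ℝ)) ^ (γ:ℕ) := by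
      rw [← Real.rpow_add hnRpos, he2]
      rw [sub_add_cancel, Real.rpow_natCast]
    calc (Cn:ℝ) * (n:ℝ) ^ e
        < ((n:ℝ) ^ (1/(k:ℝ)) / (2 ^ γ * (Nat.factorial γ : ℝ))) * (n:ℝ) ^ e :=
          mul_lt_mul_of_pos_right hCn_lt (Real.rpow_pos_of_pos hnRpos e)
      _ = ((n:ℝ) ^ e * (n:ℝ) ^ (1/(k:ℝ))) / (2 ^ γ * (Nat.factorial γ : ℝ)) := by
          ring
      _ = ((n:ℝ)) ^ (γ:ℕ) / (2 ^ γ * (Nat.factorial γ : ℝ)) := by rw [hne]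
      _ = ((n:ℝ)/2) ^ γ / (Nat.factorial γ : ℝ) := by
          rw [div_pow]
          ring
      _ ≤ (Nat.choose n γ : ℝ) := h1
  have hBlt : B < Nat.choose n γ := by
    have := lt_of_le_of_lt hbadR hchoose
    exact_mod_cast this
  have hdomex : ∃ S : Finset (Fin n), S.card = γ ∧ Dominates (Gr p k γ n) S := by
    have hpos : 0 < domCount (Gr p k γ n) γ := by omega
    rw [hdomCount_eq] at hpos
    rw [Finset.card_pos] at hpos
    obtain ⟨S, hS⟩ := hpos
    rw [Finset.mem_filter] at hS
    exact ⟨S, Finset.mem_powersetCard_univ.mp hS.1, hS.2⟩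
  constructor
  · -- domNum = γ
    obtain ⟨S, hScard, hSdom⟩ := hdomex
    apply le_antisymm
    · exact Nat.sInf_le ⟨S, hScard, hSdom⟩
    · refine le_csInf ⟨γ, ⟨S, hScard, hSdom⟩⟩ ?_
      rintro b ⟨S', hS'card, hS'dom⟩
      by_contra hb
      push_neg at hb
      exact small_not_dominates p k γ n hp hγn hkγ S' (by omega) hS'dom
  · -- the counting bound
    have hcast : (domCount (Gr p k γ n) γ : ℝ) = (Nat.choose n γ : ℝ) - (B:ℝ) := by
      have h1 : domCount (Gr p k γ n) γ = Nat.choose n γ - B := by omega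
      rw [h1]
      push_cast [Nat.cast_sub (le_of_lt hBlt)]
      ring
    rw [hcast]
    linarith [hbadR2]
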